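/- Suppose η_n → 0, √n·η_n → ∞, ζ = 1, θ_n/η_n → 1, and √n(η_n − θ_n) → r ∈ ℝ. Then the cdf F_{H,n,θ_n}(x) of √n(θ̂_H − θ_n) converges, for every x ∈ ℝ, to Φ(r) + ∫_{−∞}^{x} φ(u)·1(u > r) du. -/

import Mathlib

open MeasureTheory ProbabilityTheory Real Filter Topology Set

noncomputable def stdGauss : Measure ℝ := gaussianReal 0 1

/-- Standard normal cdf. -/
noncomputable def Phi (x : ℝ) : ℝ := (stdGauss (Set.Iic x)).toReal

/-- Standard normal density. -/
noncomputable def phi (x : ℝ) : ℝ := gaussianPDFReal 0 1 x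

/-- Hard-thresholding estimator. -/
noncomputable def hardThresh (η y : ℝ) : ℝ := if η < |y| then y else 0

/-- Soft-thresholding (LASSO) estimator. -/
noncomputable def softThresh (η y : ℝ) : ℝ := Real.sign y * max (|y| - η) 0

/-- SCAD estimator. -/
noncomputable def scadThresh (a η y : ℝ) : ℝ :=
  if |y| ≤ 2 * η then Real.sign y * max (|y| - η) 0
  else if |y| ≤ a * η then ((a - 1) * y - Real.sign y * a * η) / (a - 2)
  else y

lemma phi_nonneg (x : ℝ) : 0 ≤ phi x := gaussianPDFReal_nonneg 0 1 x

lemma phi_integrable : Integrable phi := integrable_gaussianPDFReal 0 1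

lemma phi_le_one (x : ℝ) : phi x ≤ 1 := by
  unfold phi gaussianPDFReal
  have h1 : (1 : ℝ) ≤ Real.sqrt (2 * π * (1 : NNReal)) := by
    rw [Real.one_le_sqrt]
    have := Real.pi_gt_three
    push_cast
    nlinarith
  have hinv : (Real.sqrt (2 * π * (1 : NNReal)))⁻¹ ≤ 1 := by
    rw [inv_le_one_iff₀]; right; exact h1
  have h2 : Real.exp (-(x - 0) ^ 2 / (2 * (1 : NNReal))) ≤ 1 := by
    rw [Real.exp_le_one_iff]
    have h3 : (0:ℝ) ≤ (x - 0) ^ 2 := sq_nonneg _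
    have h4 : (0:ℝ) < 2 * (1 : NNReal) := by push_cast; norm_num
    exact div_nonpos_of_nonpos_of_nonneg (by linarith) h4.le
  have h0 : (0:ℝ) ≤ Real.exp (-(x - 0) ^ 2 / (2 * (1 : NNReal))) := (Real.exp_pos _).le
  calc (Real.sqrt (2 * π * (1 : NNReal)))⁻¹ * Real.exp (-(x - 0) ^ 2 / (2 * (1 : NNReal)))
      ≤ 1 * 1 := by
        apply mul_le_mul hinv h2 h0 zero_le_one
    _ = 1 := one_mul 1

lemma stdGauss_toReal (s : Set ℝ) : (stdGauss s).toReal = ∫ x in s, phi x := by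
  simp only [phi]
  rw [stdGauss, gaussianReal_apply_eq_integral 0 one_ne_zero s,
    ENNReal.toReal_ofReal (integral_nonneg (fun x => gaussianPDFReal_nonneg 0 1 x))]

lemma Phi_eq (c : ℝ) : Phi c = ∫ x in Set.Iic c, phi x := stdGauss_toReal _

lemma Phi_add (a b : ℝ) (hab : a ≤ b) : Phi b = Phi a + ∫ x in Set.Ioc a b, phi x := by
  rw [Phi_eq, Phi_eq, ← setIntegral_union (Set.Iic_disjoint_Ioc le_rfl) measurableSet_Ioc
    phi_integrable.integrableOn phi_integrable.integrableOn, Set.Iic_union_Ioc_eq_Iic hab]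

lemma Phi_mono {a b : ℝ} (hab : a ≤ b) : Phi a ≤ Phi b := by
  rw [Phi_add a b hab]
  have : 0 ≤ ∫ x in Set.Ioc a b, phi x := integral_nonneg fun x => phi_nonneg x
  linarith

lemma Phi_lip (a b : ℝ) (hab : a ≤ b) : Phi b - Phi a ≤ b - a := by
  rw [Phi_add a b hab]
  have h1 : ∫ x in Set.Ioc a b, phi x ≤ ∫ x in Set.Ioc a b, (1:ℝ) := by
    apply setIntegral_mono_on phi_integrable.integrableOn
      (integrableOn_const (by rw [Real.volume_Ioc]; exact ENNReal.ofReal_ne_top))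
      measurableSet_Ioc
    exact fun x _ => phi_le_one x
  have h2 : ∫ x in Set.Ioc a b, (1:ℝ) = b - a := by
    rw [setIntegral_const, smul_eq_mul, mul_one, Real.volume_real_Ioc_of_le hab]
  linarith

lemma Phi_dist (a b : ℝ) : |Phi a - Phi b| ≤ |a - b| := by
  rcases le_total a b with h | h
  · rw [abs_sub_comm, abs_sub_comm a b, abs_of_nonneg (by linarith [Phi_mono h] : 0 ≤ Phi b - Phi a),
      abs_of_nonneg (by linarith : (0:ℝ) ≤ b - a)]
    exact Phi_lip a b h
  · rw [abs_of_nonneg (by linarith [Phi_mono h] : 0 ≤ Phi a - Phi b),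
      abs_of_nonneg (by linarith : (0:ℝ) ≤ a - b)]
    exact Phi_lip b a h

lemma tendsto_Phi {c : ℕ → ℝ} {l : ℝ} (h : Tendsto c atTop (𝓝 l)) :
    Tendsto (fun n => Phi (c n)) atTop (𝓝 (Phi l)) := by
  rw [tendsto_iff_dist_tendsto_zero]
  apply squeeze_zero (fun n => dist_nonneg) (fun n => ?_)
    (tendsto_iff_dist_tendsto_zero.mp h)
  rw [Real.dist_eq, Real.dist_eq]
  exact Phi_dist _ _

lemma target_eq (r x : ℝ) :
    Phi r + ∫ u in Set.Iic x, (if r < u then phi u else 0) = Phi (max x r) := by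
  have hind : ∀ u : ℝ, (if r < u then phi u else 0) = (Set.Ioi r).indicator phi u := by
    intro u; simp [Set.indicator_apply, Set.mem_Ioi]
  simp_rw [hind]
  rw [setIntegral_indicator measurableSet_Ioi, Set.Iic_inter_Ioi]
  rcases le_total x r with h | h
  · rw [Set.Ioc_eq_empty (by exact not_lt.mpr h), max_eq_right h]
    simp
  · rw [max_eq_left h, Phi_add r x h]

lemma setEq (x η θ s : ℝ) (hs : 1 ≤ s) (hη : 0 < η) (hb : -(s * (η + θ)) ≤ x)
    (hc : -(s * θ) ≤ x) :
    {z : ℝ | s * (hardThresh η (θ + z / s) - θ) ≤ x} = Set.Iic (max x (s * (η - θ))) := by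
  have hs0 : (0:ℝ) < s := lt_of_lt_of_le one_pos hs
  ext z
  have hz : s * (θ + z / s - θ) = z := by field_simp; ring
  simp only [Set.mem_setOf_eq, Set.mem_Iic, hardThresh]
  split_ifs with h
  · rw [hz]
    constructor
    · intro h1; exact le_max_of_le_left h1
    · intro h1
      by_contra hx
      push_neg at hx
      have hza : z ≤ s * (η - θ) := by
        rcases max_cases x (s * (η - θ)) with ⟨he, _⟩ | ⟨he, _⟩
        · rw [he] at h1; linarith
        · rw [he] at h1; exact h1
      have h2 : θ + z / s ≤ η := by
        have : z / s ≤ η - θ := by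
          rw [div_le_iff₀ hs0]; linarith [hza, mul_comm (η - θ) s]
        linarith
      rcases lt_abs.mp h with h3 | h3
      · linarith
      · -- η < -(θ + z/s), so z < -s(η+θ) ≤ x, contradicting x < z
        have h4 : s * η < s * (-(θ + z / s)) := by
          exact mul_lt_mul_of_pos_left h3 hs0
        have h5 : s * (-(θ + z / s)) = -(s * θ) - z := by
          have : s * (z / s) = z := by field_simp
          ring_nf
          ring_nf at this
          linarith
        nlinarith
  · push_neg at h
    constructor
    · intro _
      apply le_max_of_le_right
      have h2 : θ + z / s ≤ η := le_of_abs_le h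
      have : z / s ≤ η - θ := by linarith
      calc z = s * (z / s) := by field_simp
        _ ≤ s * (η - θ) := by apply mul_le_mul_of_nonneg_left this hs0.le
    · intro _
      have : s * (0 - θ) = -(s * θ) := by ring
      rw [this]; exact hc

theorem stmt_15 (η θ : ℕ → ℝ) (hηpos : ∀ n, 0 < η n) (r : ℝ)
    (hη0 : Tendsto η atTop (𝓝 0))
    (hηe : Tendsto (fun n : ℕ => Real.sqrt n * η n) atTop atTop)
    (hθζ : Tendsto (fun n => θ n / η n) atTop (𝓝 1))
    (hr : Tendsto (fun n : ℕ => Real.sqrt n * (η n - θ n)) atTop (𝓝 r)) :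
    ∀ x : ℝ,
      Tendsto (fun n : ℕ => (stdGauss {z : ℝ |
          Real.sqrt n * (hardThresh (η n) (θ n + z / Real.sqrt n) - θ n) ≤ x}).toReal)
        atTop (𝓝 (Phi r + ∫ u in Set.Iic x, (if r < u then phi u else 0))) := by
  intro x
  rw [target_eq]
  -- auxiliary limits
  have hθt : Tendsto (fun n : ℕ => Real.sqrt n * θ n) atTop atTop := by
    have := Filter.Tendsto.atTop_mul_pos one_pos hηe hθζ
    apply this.congr
    intro n
    rw [mul_assoc, mul_div_cancel₀ _ (hηpos n).ne']
  have hbt : Tendsto (fun n : ℕ => Real.sqrt n * (η n + θ n)) atTop atTop := by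
    have hlim : Tendsto (fun n => 1 + θ n / η n) atTop (𝓝 (1 + 1)) :=
      tendsto_const_nhds.add hθζ
    have := Filter.Tendsto.atTop_mul_pos (by norm_num : (0:ℝ) < 1 + 1) hηe hlim
    apply this.congr
    intro n
    rw [mul_assoc, mul_add, mul_one, mul_div_cancel₀ _ (hηpos n).ne', mul_add]
  -- eventual set equality
  have hev : ∀ᶠ n : ℕ in atTop,
      {z : ℝ | Real.sqrt n * (hardThresh (η n) (θ n + z / Real.sqrt n) - θ n) ≤ x}
        = Set.Iic (max x (Real.sqrt n * (η n - θ n))) := by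
    filter_upwards [eventually_ge_atTop 1, hθt.eventually_ge_atTop (-x),
      hbt.eventually_ge_atTop (-x)] with n h1 h2 h3
    apply setEq _ _ _ _ _ (hηpos n) (by linarith) (by linarith)
    rw [Real.one_le_sqrt]
    exact_mod_cast h1
  -- limit of the simplified sequence
  have hmax : Tendsto (fun n : ℕ => max x (Real.sqrt n * (η n - θ n))) atTop (𝓝 (max x r)) :=
    tendsto_const_nhds.max hr
  have hlim := tendsto_Phi hmax
  apply hlim.congr'
  filter_upwards [hev] with n hn
  rw [Phi, hn]
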